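/- In a pregeometry (X, cl), if w₁,…,wₙ and v₁,…,vₙ are tuples independent over a set C such that for each i, wᵢ ∈ cl(C ∪ {v₁,…,vᵢ}), then for each i, vᵢ ∈ cl(C ∪ {w₁,…,wᵢ}); that is, wᵢ and vᵢ are interdependent over C ∪ {v₁,…,vᵢ₋₁}. -/
import Mathlib


structure Pregeometry (X : Type*) where
  cl : Set X → Set X
  subset_cl : ∀ A : Set X, A ⊆ cl A
  cl_cl : ∀ A : Set X, cl (cl A) = cl A
  mono : ∀ {A B : Set X}, A ⊆ B → cl A ⊆ cl B
  finite_character : ∀ (A : Set X) (x : X), x ∈ cl A →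
    ∃ B : Set X, B ⊆ A ∧ B.Finite ∧ x ∈ cl B
  exchange : ∀ (A : Set X) (a b : X), a ∈ cl (A ∪ {b}) → a ∉ cl A → b ∈ cl (A ∪ {a})

/-- A set is independent if no element is in the closure of the others. -/
def Pregeometry.Indep {X : Type*} (P : Pregeometry X) (A : Set X) : Prop :=
  ∀ a ∈ A, a ∉ P.cl (A \ {a})

/-- A tuple is independent over C if no entry is in the closure of C together
with the other entries. -/
def Pregeometry.IndepOver {X : Type*} (P : Pregeometry X) (C : Set X)
    {n : ℕ} (w : Fin n → X) : Prop :=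
  ∀ i : Fin n, w i ∉ P.cl (C ∪ w '' {j | j ≠ i})

lemma Pregeometry.cl_subset_cl {X : Type*} (P : Pregeometry X) {A B : Set X}
    (h : A ⊆ P.cl B) : P.cl A ⊆ P.cl B := by
  have := P.mono h
  rwa [P.cl_cl] at this

/-- If w and v are tuples independent over C with wᵢ ∈ cl(C ∪ {v₁,…,vᵢ}) for each i,
then vᵢ ∈ cl(C ∪ {w₁,…,wᵢ}) for each i. -/
theorem stmt3 {X : Type*} (P : Pregeometry X) (C : Set X) (n : ℕ)
    (w v : Fin n → X)
    (hw : P.IndepOver C w) (hv : P.IndepOver C v)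
    (h : ∀ i : Fin n, w i ∈ P.cl (C ∪ v '' {j | j ≤ i})) :
    ∀ i : Fin n, v i ∈ P.cl (C ∪ w '' {j | j ≤ i}) := by
  intro i
  induction i using WellFoundedLT.induction with
  | ind i IH =>
  set A : Set X := C ∪ v '' {j | j < i} with hA
  have hsplit : C ∪ v '' {j | j ≤ i} = A ∪ {v i} := by
    rw [hA, Set.union_assoc]
    congr 1
    ext x
    simp only [Set.mem_image, Set.mem_union, Set.mem_singleton_iff, Set.mem_setOf_eq]
    constructor
    · rintro ⟨j, hj, rfl⟩
      rcases lt_or_eq_of_le hj with hj' | hj'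
      · exact Or.inl ⟨j, hj', rfl⟩
      · exact Or.inr (by rw [hj'])
    · rintro (⟨j, hj, rfl⟩ | rfl)
      · exact ⟨j, le_of_lt hj, rfl⟩
      · exact ⟨i, le_refl i, rfl⟩
  have h1 : w i ∈ P.cl (A ∪ {v i}) := by rw [← hsplit]; exact h i
  have h2 : w i ∉ P.cl A := by
    intro hcl
    apply hw i
    have hsub : A ⊆ P.cl (C ∪ w '' {j | j ≠ i}) := by
      rintro x (hx | ⟨j, hj, rfl⟩)
      · exact P.subset_cl _ (Or.inl hx)
      · refine P.cl_subset_cl ((Set.union_subset_union_right C ?_).trans (P.subset_cl _)) (IH j hj)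
        rintro y ⟨k, hk, rfl⟩
        simp only [Set.mem_setOf_eq] at hk hj
        refine ⟨k, ?_, rfl⟩
        simp only [Set.mem_setOf_eq]
        rintro rfl
        exact absurd hk (not_le_of_gt hj)
    exact P.cl_subset_cl hsub hcl
  have h3 : v i ∈ P.cl (A ∪ {w i}) := P.exchange A (w i) (v i) h1 h2
  have hsub2 : A ∪ {w i} ⊆ P.cl (C ∪ w '' {j | j ≤ i}) := by
    rintro x ((hx | ⟨j, hj, rfl⟩) | rfl)
    · exact P.subset_cl _ (Or.inl hx)
    · refine P.cl_subset_cl ((Set.union_subset_union_right C ?_).trans (P.subset_cl _)) (IH j hj)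
      rintro y ⟨k, hk, rfl⟩
      simp only [Set.mem_setOf_eq] at hk hj
      exact ⟨k, Set.mem_setOf_eq ▸ le_of_lt (lt_of_le_of_lt hk hj), rfl⟩
    · exact P.subset_cl _ (Or.inr ⟨i, le_refl i, rfl⟩)
  exact P.cl_subset_cl hsub2 h3
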